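/- Let C₃³ = { (a₁,a₂,a₃,a₄) ∈ 𝔽₃⁴ : a₁+a₂+a₃+a₄ = 0 } with S₄ acting by permuting coordinates. For every subgroup H of S₄, the first group cohomology H¹(H, C₃³) vanishes. -/

import Mathlib

set_option maxRecDepth 20000

private def rho (g : Equiv.Perm (Fin 4)) (m : Fin 4 → ZMod 3) : Fin 4 → ZMod 3 :=
  fun i => m (g⁻¹ i)

private lemma rho_mul (g h : Equiv.Perm (Fin 4)) (m : Fin 4 → ZMod 3) :
    rho (g * h) m = rho g (rho h m) := by
  funext i; simp [rho, Equiv.Perm.mul_apply]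

private lemma rho_zero (g : Equiv.Perm (Fin 4)) : rho g 0 = 0 := rfl

private lemma rho_add (g : Equiv.Perm (Fin 4)) (m n : Fin 4 → ZMod 3) :
    rho g (m + n) = rho g m + rho g n := rfl

private lemma rho_smul (g : Equiv.Perm (Fin 4)) (c : ZMod 3) (m : Fin 4 → ZMod 3) :
    rho g (c • m) = c • rho g m := rfl

private lemma rho_sum {α : Type} (s : Finset α) (g : Equiv.Perm (Fin 4))
    (F : α → Fin 4 → ZMod 3) : rho g (∑ x ∈ s, F x) = ∑ x ∈ s, rho g (F x) := by
  funext i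
  simp [rho, Finset.sum_apply]

private lemma cyc : ∀ τ : Fin 4 → Fin 4, (∀ i, τ (τ (τ i)) = i) → τ ≠ id →
    ∀ x : Fin 4 → ZMod 3, (∑ i, x i = 0) → (∀ i, x i + x (τ i) + x (τ (τ i)) = 0) →
    ∃ b : Fin 4 → ZMod 3, ∀ i, x i = b (τ i) - b i := by decide

/-- If a cocycle vanishes on a subgroup `P` whose index is coprime to 3, it is a
coboundary (averaging over the quotient). -/
private lemma vanish_quot (H : Subgroup (Equiv.Perm (Fin 4))) (f : H → Fin 4 → ZMod 3)
    (hco : ∀ g h : H, f (g * h) = rho ↑g (f h) + f g)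
    (P : Subgroup H) (hP : ∀ p ∈ P, f p = 0)
    (hm : ¬ (3 ∣ Nat.card (H ⧸ P))) :
    ∃ a : Fin 4 → ZMod 3, ∀ g : H, f g = rho ↑g a - a := by
  classical
  haveI : Fintype (H ⧸ P) := Fintype.ofFinite _
  have hwd : ∀ g h : H, (QuotientGroup.leftRel P) g h → f g = f h := by
    intro g h hr
    rw [QuotientGroup.leftRel_apply] at hr
    have := hco g (g⁻¹ * h)
    rw [mul_inv_cancel_left] at this
    rw [this, hP _ hr, rho_zero, zero_add]
  set F : H ⧸ P → Fin 4 → ZMod 3 := Quotient.lift f hwd with hF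
  have hFmk : ∀ h : H, F (QuotientGroup.mk h) = f h := fun h => rfl
  set T : Fin 4 → ZMod 3 := ∑ x : H ⧸ P, F x with hT
  set m : ℕ := Fintype.card (H ⧸ P) with hmdef
  have key : ∀ g : H, T = rho ↑g T + (m : ZMod 3) • f g := by
    intro g
    have h1 : ∑ x : H ⧸ P, F (g • x) = T := by
      exact Equiv.sum_comp (MulAction.toPerm g) F
    have h2 : ∀ x : H ⧸ P, F (g • x) = rho ↑g (F x) + f g := by
      intro x
      induction x using QuotientGroup.induction_on with
      | H h =>
        have : g • (QuotientGroup.mk h : H ⧸ P) = QuotientGroup.mk (g * h) := rfl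
        rw [this, hFmk, hFmk, hco]
    calc T = ∑ x : H ⧸ P, F (g • x) := h1.symm
      _ = ∑ x : H ⧸ P, (rho ↑g (F x) + f g) := by simp only [h2]
      _ = rho ↑g T + (m : ZMod 3) • f g := by
          rw [Finset.sum_add_distrib, ← rho_sum, ← hT, Finset.sum_const, Finset.card_univ,
            ← hmdef, Nat.cast_smul_eq_nsmul]
  have hm3 : (m : ZMod 3) ≠ 0 := by
    rw [Ne, ZMod.natCast_eq_zero_iff]
    rwa [hmdef, ← Nat.card_eq_fintype_card]
  refine ⟨-((m : ZMod 3)⁻¹ • T), fun g => ?_⟩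
  have := key g
  have h4 : (m : ZMod 3) • f g = T - rho ↑g T := by
    funext i
    have := congrFun this i
    simp only [Pi.add_apply, Pi.sub_apply, Pi.smul_apply] at this ⊢
    linear_combination -this
  calc f g = (m : ZMod 3)⁻¹ • ((m : ZMod 3) • f g) := (inv_smul_smul₀ hm3 _).symm
    _ = (m : ZMod 3)⁻¹ • (T - rho ↑g T) := by rw [h4]
    _ = rho ↑g (-((m : ZMod 3)⁻¹ • T)) - -((m : ZMod 3)⁻¹ • T) := by
        funext i; simp [rho, smul_sub]; ring


/-- The action of `S₄` on `𝔽₃⁴` by permuting coordinates, restricted to the submodule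
`C₃³` of vectors with coordinate sum zero.  For every subgroup `H` of `S₄`, the first
group cohomology `H¹(H, C₃³)` vanishes: every 1-cocycle is a 1-coboundary. -/
theorem stmt3 (H : Subgroup (Equiv.Perm (Fin 4)))
    (f : H → (Fin 4 → ZMod 3))
    (hsum : ∀ g : H, ∑ i, f g i = 0)
    (hcocycle : ∀ g h : H,
      f (g * h) = (fun i => f h ((g⁻¹ : Equiv.Perm (Fin 4)) i)) + f g) :
    ∃ a : Fin 4 → ZMod 3, (∑ i, a i = 0) ∧
      ∀ g : H, f g = (fun i => a ((g⁻¹ : Equiv.Perm (Fin 4)) i)) - a := by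
  classical
  have hco : ∀ g h : H, f (g * h) = rho ↑g (f h) + f g := by
    intro g h
    rw [hcocycle g h]
    rfl
  have hone : f 1 = 0 := by
    have := hco 1 1
    rw [mul_one] at this
    have h2 : rho ↑(1 : H) (f 1) = f 1 := by funext i; simp [rho]
    rw [h2] at this
    have := congrArg (· - f 1) this
    simpa using this.symm
  have main : ∃ a : Fin 4 → ZMod 3, ∀ g : H, f g = rho ↑g a - a := by
    by_cases h3 : 3 ∣ Nat.card H
    · -- 3 divides |H| : use Cauchy + the cyclic computation + quotient averaging
      haveI : Fact (Nat.Prime 3) := ⟨by norm_num⟩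
      haveI : Fintype H := Fintype.ofFinite _
      obtain ⟨σ, hσ⟩ : ∃ σ : H, orderOf σ = 3 := by
        apply exists_prime_orderOf_dvd_card 3
        rwa [← Nat.card_eq_fintype_card]
      have hσ3 : σ ^ 3 = 1 := by rw [← hσ]; exact pow_orderOf_eq_one σ
      have hσP3 : ((σ : Equiv.Perm (Fin 4)))⁻¹ ^ 3 = 1 := by
        rw [inv_pow, ← Subgroup.coe_pow, hσ3]
        simp
      set τ : Fin 4 → Fin 4 := ⇑((σ : Equiv.Perm (Fin 4)))⁻¹ with hτ
      have hτ3 : ∀ i, τ (τ (τ i)) = i := by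
        intro i
        have : ((σ : Equiv.Perm (Fin 4)))⁻¹ ^ 3 • i = i := by rw [hσP3]; rfl
        simpa [pow_succ, Equiv.Perm.mul_apply, hτ] using this
      have hτne : τ ≠ id := by
        intro hcon
        have h1 : ((σ : Equiv.Perm (Fin 4)))⁻¹ = 1 := Equiv.coe_fn_injective hcon
        have h2 : (σ : Equiv.Perm (Fin 4)) = 1 := by
          rwa [inv_eq_one] at h1
        have h4 : σ = 1 := Subtype.ext h2
        rw [h4, orderOf_one] at hσ
        norm_num at hσ
      have hN : ∀ i, f σ i + f σ (τ i) + f σ (τ (τ i)) = 0 := by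
        have e1 : f (σ * σ) = rho ↑σ (f σ) + f σ := hco σ σ
        have e2 : f (σ * (σ * σ)) = rho ↑σ (f (σ * σ)) + f σ := hco σ (σ * σ)
        have e3 : σ * (σ * σ) = 1 := by
          rw [← hσ3, pow_succ, pow_two, mul_assoc]
        rw [e3, hone, e1, rho_add] at e2
        intro i
        have := congrFun e2 i
        simp only [Pi.add_apply, Pi.zero_apply, rho, hτ] at this ⊢
        linear_combination -this
      obtain ⟨b, hb⟩ := cyc τ hτ3 hτne (f σ) (hsum σ) hN
      have hbσ : f σ = rho ↑σ b - b := by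
        funext i
        simpa [rho, hτ] using hb i
      -- the modified cocycle
      set f' : H → Fin 4 → ZMod 3 := fun g => f g - (rho ↑g b - b) with hf'
      have hco' : ∀ g h : H, f' (g * h) = rho ↑g (f' h) + f' g := by
        intro g h
        funext i
        have := congrFun (hco g h) i
        simp only [hf', Pi.sub_apply, Pi.add_apply, rho, Subgroup.coe_mul,
          Equiv.Perm.mul_apply, mul_inv_rev] at this ⊢
        linear_combination this
      have hone' : f' 1 = 0 := by
        funext i
        simp [hf', hone, rho]
      -- subgroup where f' vanishes
      set K : Subgroup H :=
        { carrier := {g : H | f' g = 0}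
          mul_mem' := by
            intro g h hg hh
            simp only [Set.mem_setOf_eq] at *
            rw [hco' g h, hg, hh, rho_zero, add_zero]
          one_mem' := hone'
          inv_mem' := by
            intro g hg
            simp only [Set.mem_setOf_eq] at *
            have := hco' g⁻¹ g
            rw [inv_mul_cancel, hone', hg, rho_zero, zero_add] at this
            exact this.symm } with hK
      have hσK : σ ∈ K := by
        show f' σ = 0
        rw [hf']
        simp [hbσ]
      set P : Subgroup H := Subgroup.zpowers σ with hPdef
      have hPK : P ≤ K := Subgroup.zpowers_le.mpr hσK
      have hP : ∀ p ∈ P, f' p = 0 := fun p hp => hPK hp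
      have hmq : ¬ (3 ∣ Nat.card (H ⧸ P)) := by
        intro hdvd
        obtain ⟨k, hk⟩ := hdvd
        have hcard : Nat.card H = Nat.card (H ⧸ P) * Nat.card P :=
          Subgroup.card_eq_card_quotient_mul_card_subgroup P
        have hcP : Nat.card P = 3 := by
          rw [hPdef, Nat.card_zpowers, hσ]
        have h24 : Nat.card H ∣ 24 := by
          have := Subgroup.card_subgroup_dvd_card H
          simpa [Nat.card_eq_fintype_card, Fintype.card_perm, Nat.factorial] using this
        rw [hcard, hcP, hk] at h24
        have h9 : 9 ∣ 24 := dvd_trans ⟨k, by ring⟩ h24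
        norm_num at h9
      obtain ⟨a₀, ha₀⟩ := vanish_quot H f' hco' P hP hmq
      refine ⟨a₀ + b, fun g => ?_⟩
      have := ha₀ g
      funext i
      have h5 := congrFun this i
      simp only [hf', Pi.sub_apply, Pi.add_apply, rho] at h5 ⊢
      linear_combination h5
    · -- 3 does not divide |H| : average over the whole group (P = ⊥)
      apply vanish_quot H f hco ⊥
      · intro p hp
        rw [Subgroup.mem_bot] at hp
        rw [hp]; exact hone
      · intro hdvd
        apply h3
        have hcard : Nat.card H = Nat.card (H ⧸ (⊥ : Subgroup H)) * Nat.card (⊥ : Subgroup H) :=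
          Subgroup.card_eq_card_quotient_mul_card_subgroup ⊥
        rw [Subgroup.card_bot, mul_one] at hcard
        rwa [hcard]
  -- adjust the constant so the coordinates sum to zero
  obtain ⟨a, ha⟩ := main
  set c : ZMod 3 := -(a 0 + a 1 + a 2 + a 3) with hc
  refine ⟨fun i => a i + c, ?_, fun g => ?_⟩
  · rw [Fin.sum_univ_four]
    have h3 : (3 : ZMod 3) = 0 := rfl
    rw [hc]
    linear_combination (-(a 0 + a 1 + a 2 + a 3)) * h3
  · funext i
    have := congrFun (ha g) i
    simp only [Pi.sub_apply, rho] at this ⊢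
    linear_combination this
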